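/- (Invariance via local compactness estimates when the flow map is only locally defined) Let (X,d) be a metric space, S: X → X a map, and μ_ε → μ_0 weakly with each μ_ε invariant under S. Suppose for every compact K ⊂ X and every θ > 0 there exists δ > 0 with S(K + B_δ) ⊂ S(K) + B_θ (where K + B_r denotes the open r-neighborhood). Then μ_0(K) ≤ μ_0(closure(S(K) + B_θ)) for every θ > 0; if moreover S is invertible with the same hypotheses for S^{-1}, then μ_0(K) = μ_0(S(K)) for every compact K. -/

import Mathlib

open MeasureTheory Filter Metric
open scoped Topology
open scoped BoundedContinuousFunction

noncomputable section

/-- Invariance via local compactness estimates when the flow map is only locally defined: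
let `μ_ε → μ_0` weakly with each `μ_ε` invariant under `S` (`μ_ε(S(A)) = μ_ε(A)`), and
suppose for every compact `K` and `θ > 0` there is `δ > 0` with
`S(K + B_δ) ⊆ S(K) + B_θ`.  Then `μ_0(K) ≤ μ_0(closure(S(K) + B_θ))` for every `θ > 0`;
if moreover `S` is invertible with inverse `T` satisfying the same hypotheses, then
`μ_0(K) = μ_0(S(K))` for every compact `K`. -/
theorem invariance_local_flow
    {X : Type*} [MetricSpace X] [MeasurableSpace X] [BorelSpace X]
    (S T : X → X)
    (μe : ℕ → Measure X) (μ0 : Measure X)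
    [∀ k, IsProbabilityMeasure (μe k)] [IsProbabilityMeasure μ0]
    (hw : ∀ f : X →ᵇ ℝ,
      Tendsto (fun k => ∫ x, f x ∂(μe k)) atTop (nhds (∫ x, f x ∂μ0)))
    (hinvS : ∀ k, ∀ A : Set X, MeasurableSet A → μe k (S '' A) = μe k A)
    (hregS : ∀ K : Set X, IsCompact K → ∀ θ : ℝ, 0 < θ → ∃ δ : ℝ, 0 < δ ∧
      S '' (thickening δ K) ⊆ thickening θ (S '' K)) :
    (∀ K : Set X, IsCompact K → ∀ θ : ℝ, 0 < θ →
      μ0 K ≤ μ0 (closure (thickening θ (S '' K))))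
    ∧ (Function.LeftInverse T S → Function.RightInverse T S →
        (∀ k, ∀ A : Set X, MeasurableSet A → μe k (T '' A) = μe k A) →
        (∀ K : Set X, IsCompact K → ∀ θ : ℝ, 0 < θ → ∃ δ : ℝ, 0 < δ ∧
          T '' (thickening δ K) ⊆ thickening θ (T '' K)) →
        ∀ K : Set X, IsCompact K → μ0 K = μ0 (S '' K)) := by
  -- package as probability measures and get weak convergence
  set P0 : ProbabilityMeasure X := ⟨μ0, ‹_›⟩ with hP0
  set Pe : ℕ → ProbabilityMeasure X := fun k => ⟨μe k, inferInstance⟩ with hPe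
  have htend : Tendsto Pe atTop (𝓝 P0) :=
    ProbabilityMeasure.tendsto_iff_forall_integral_tendsto.mpr hw
  -- the main estimate, for an arbitrary map satisfying the hypotheses
  have main : ∀ (R : X → X),
      (∀ k, ∀ A : Set X, MeasurableSet A → μe k (R '' A) = μe k A) →
      (∀ K : Set X, IsCompact K → ∀ θ : ℝ, 0 < θ → ∃ δ : ℝ, 0 < δ ∧
        R '' (thickening δ K) ⊆ thickening θ (R '' K)) →
      ∀ K : Set X, IsCompact K → ∀ θ : ℝ, 0 < θ →
        μ0 K ≤ μ0 (closure (thickening θ (R '' K))) := by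
    intro R hinv hreg K hK θ hθ
    obtain ⟨δ, hδ, hsub⟩ := hreg K hK θ hθ
    calc μ0 K ≤ μ0 (thickening δ K) := measure_mono (self_subset_thickening hδ K)
      _ ≤ atTop.liminf (fun k => μe k (thickening δ K)) :=
          ProbabilityMeasure.le_liminf_measure_open_of_tendsto htend isOpen_thickening
      _ ≤ atTop.liminf (fun k => μe k (thickening θ (R '' K))) := by
          refine liminf_le_liminf (Eventually.of_forall fun k => ?_)
          rw [← hinv k _ isOpen_thickening.measurableSet]
          exact measure_mono hsub
      _ ≤ atTop.limsup (fun k => μe k (thickening θ (R '' K))) := liminf_le_limsup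
      _ ≤ atTop.limsup (fun k => μe k (closure (thickening θ (R '' K)))) :=
          limsup_le_limsup (Eventually.of_forall fun k => measure_mono subset_closure)
      _ ≤ μ0 (closure (thickening θ (R '' K))) :=
          ProbabilityMeasure.limsup_measure_closed_le_of_tendsto htend isClosed_closure
  -- pass to the limit θ → 0
  have key : ∀ (K A : Set X),
      (∀ θ : ℝ, 0 < θ → μ0 K ≤ μ0 (closure (thickening θ A))) → μ0 K ≤ μ0 (closure A) := by
    intro K A h
    set s : ℕ → Set X := fun n => closure (thickening (1 / (n + 1) : ℝ) A) with hs
    have hmeas : ∀ n, NullMeasurableSet (s n) μ0 := fun n =>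
      isClosed_closure.measurableSet.nullMeasurableSet
    have hanti : Antitone s := by
      intro m n hmn
      refine closure_mono (thickening_mono ?_ A)
      apply one_div_le_one_div_of_le
      · positivity
      · exact_mod_cast by omega
    have hiInter : (⋂ n, s n) = closure A := by
      apply subset_antisymm
      · intro x hx
        rw [EMetric.mem_closure_iff_infEdist_zero]
        have hb : ∀ n : ℕ, EMetric.infEdist x A ≤ ENNReal.ofReal (1 / (n + 1) : ℝ) := by
          intro n
          have hx' : x ∈ cthickening (1 / (n + 1) : ℝ) A :=
            closure_thickening_subset_cthickening _ _ (Set.mem_iInter.1 hx n)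
          exact hx'
        have hlim : Tendsto (fun n : ℕ => ENNReal.ofReal (1 / (n + 1) : ℝ)) atTop (𝓝 0) := by
          rw [show (0 : ENNReal) = ENNReal.ofReal 0 by simp]
          exact ENNReal.tendsto_ofReal tendsto_one_div_add_atTop_nhds_zero_nat
        exact le_antisymm (ge_of_tendsto' hlim hb) zero_le'
      · intro x hx
        refine Set.mem_iInter.2 fun n => subset_closure ?_
        rw [mem_thickening_iff_infEdist_lt]
        have : Metric.infEDist x A = 0 := Metric.mem_closure_iff_infEDist_zero.mp hx
        rw [this]
        exact ENNReal.ofReal_pos.2 (by positivity)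
    have htendm : Tendsto (μ0 ∘ s) atTop (𝓝 (μ0 (⋂ n, s n))) :=
      tendsto_measure_iInter_atTop hmeas hanti ⟨0, measure_ne_top _ _⟩
    rw [hiInter] at htendm
    exact ge_of_tendsto' htendm fun n => h _ (by positivity)
  refine ⟨main S hinvS hregS, fun hLI hRI hinvT hregT K hK => ?_⟩
  -- S and T are continuous
  have cont : ∀ (R : X → X),
      (∀ K : Set X, IsCompact K → ∀ θ : ℝ, 0 < θ → ∃ δ : ℝ, 0 < δ ∧
        R '' (thickening δ K) ⊆ thickening θ (R '' K)) → Continuous R := by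
    intro R hreg
    rw [Metric.continuous_iff]
    intro b ε hε
    obtain ⟨δ, hδ, h⟩ := hreg {b} isCompact_singleton ε hε
    refine ⟨δ, hδ, fun a ha => ?_⟩
    have : R a ∈ thickening ε (R '' {b}) :=
      h ⟨a, by simpa [thickening_singleton, mem_ball] using ha, rfl⟩
    simpa [Set.image_singleton, thickening_singleton, mem_ball] using this
  have contS : Continuous S := cont S hregS
  have contT : Continuous T := cont T hregT
  have hSK : IsCompact (S '' K) := hK.image contS
  have hTSK : T '' (S '' K) = K := by
    rw [Set.image_image]
    simp only [hLI _]
    exact Set.image_id K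
  apply le_antisymm
  · have := key K (S '' K) (fun θ hθ => main S hinvS hregS K hK θ hθ)
    rwa [hSK.isClosed.closure_eq] at this
  · have := key (S '' K) (T '' (S '' K)) (fun θ hθ => main T hinvT hregT (S '' K) hSK θ hθ)
    rwa [hTSK, hK.isClosed.closure_eq] at this
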